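/- For every positive integer p and every real h, det_{0≤i,j<p}( (−1)^i H_{i+j}(0) − H_{i+j}(0) e^{−h²} ) = 2^{C(p,2)} ( Π_{j=0}^{p−1} j! ) (1 − e^{−2h²})^{⌊p/2⌋} (1 − e^{−h²})^{⌈p/2⌉ − ⌊p/2⌋}, where C(p,2) = p(p−1)/2. -/

import Mathlib

open scoped BigOperators

/-- The `k`-th physicists' Hermite polynomial, via
`H_k(z)/k! = Σ_m ((-1)^(k-m)/(k-m)!) (2z)^(2m-k)/(2m-k)!` (terms with negative
factorial arguments being zero). -/
noncomputable def hermiteH (k : ℕ) (z : ℝ) : ℝ :=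
  (k.factorial : ℝ) * ∑ m ∈ Finset.range (k+1),
    if k ≤ 2*m then ((-1:ℝ)^(k-m) / (k-m).factorial) * ((2*z)^(2*m-k) / (2*m-k).factorial)
    else 0

/-- Coefficients of the monomial-to-(scaled Hermite) change of basis:
`t i k = (-1)^((i-k)/2) i! / (k! ((i-k)/2)!)` when `k ≤ i` and `i ≡ k [2]`. -/
noncomputable def tcoef (i k : ℕ) : ℝ :=
  if k ≤ i ∧ (i - k) % 2 = 0 then
    (-1)^((i-k)/2) * (i.factorial : ℝ) / ((k.factorial : ℝ) * (((i-k)/2).factorial : ℝ))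
  else 0

lemma tcoef_self (i : ℕ) : tcoef i i = 1 := by
  simp [tcoef]
  exact Nat.factorial_ne_zero i

lemma tcoef_of_lt {i k : ℕ} (h : i < k) : tcoef i k = 0 := by
  simp [tcoef, Nat.not_le.mpr h]

lemma tcoef_zero_left (k : ℕ) : tcoef 0 k = if k = 0 then 1 else 0 := by
  rcases Nat.eq_zero_or_pos k with rfl | hk
  · simpa using tcoef_self 0
  · simp [tcoef_of_lt hk, Nat.pos_iff_ne_zero.mp hk]

lemma hermiteH_zero (k : ℕ) : hermiteH k 0 = tcoef k 0 := by
  have hsum : ∀ m ∈ Finset.range (k+1),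
      (if k ≤ 2*m then ((-1:ℝ)^(k-m) / (k-m).factorial) * ((2*(0:ℝ))^(2*m-k) / (2*m-k).factorial)
       else 0)
      = if 2*m = k then ((-1:ℝ)^(k-m) / (k-m).factorial) else 0 := by
    intro m _
    rcases lt_trichotomy (2*m) k with hlt | heq | hgt
    · rw [if_neg (Nat.not_le.mpr hlt), if_neg hlt.ne]
    · rw [if_pos heq.ge, if_pos heq, heq, Nat.sub_self]
      norm_num
    · rw [if_pos hgt.le, if_neg hgt.ne']
      rw [mul_zero, zero_pow (Nat.sub_ne_zero_of_lt hgt)]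
      simp
  rw [hermiteH, Finset.sum_congr rfl hsum]
  rcases Nat.even_or_odd k with ⟨s, hs⟩ | ⟨s, hs⟩
  · subst hs
    rw [Finset.sum_eq_single s]
    · have h1 : 2 * s = s + s := by ring
      rw [if_pos h1]
      have h2 : s + s - s = s := by omega
      rw [tcoef, if_pos ⟨Nat.zero_le _, by omega⟩, h2]
      have h3 : (s + s - 0) / 2 = s := by omega
      rw [h3]
      simp
      ring
    · intro b _ hb
      exact if_neg (fun hc => hb (by omega))
    · intro hs; exact absurd (Finset.mem_range.mpr (by omega)) hs
  · subst hs
    rw [Finset.sum_eq_zero, tcoef, if_neg (by omega), mul_zero]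
    intro m _
    rw [if_neg (by omega)]

lemma tcoef_rec_zero (i : ℕ) : tcoef (i+1) 0 = -2 * tcoef i 1 := by
  rcases Nat.even_or_odd i with ⟨m, hm⟩ | ⟨m, hm⟩
  · subst hm
    rcases Nat.eq_zero_or_pos m with rfl | hm
    · norm_num [tcoef]
    · rw [tcoef, if_neg (by omega), tcoef, if_neg (by omega)]; ring
  · subst hm
    rw [tcoef, if_pos (by omega : (0:ℕ) ≤ 2*m+1+1 ∧ (2*m+1+1-0)%2 = 0),
        tcoef, if_pos (by omega : (1:ℕ) ≤ 2*m+1 ∧ (2*m+1-1)%2 = 0)]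
    have h1 : (2*m+1+1-0)/2 = m+1 := by omega
    have h2 : (2*m+1-1)/2 = m := by omega
    rw [h1, h2]
    have h3 : 2*m+1+1 = (2*m+1)+1 := by ring
    rw [h3, Nat.factorial_succ (2*m+1), Nat.factorial_succ m, Nat.factorial_zero,
        Nat.factorial_one, pow_succ]
    push_cast
    field_simp
    ring

lemma tcoef_rec (i k : ℕ) :
    tcoef (i+1) (k+1) = tcoef i k - 2*(k+2) * tcoef i (k+2) := by
  rcases Nat.lt_or_ge i k with hik | hik
  · rw [tcoef_of_lt (by omega), tcoef_of_lt hik, tcoef_of_lt (by omega)]; ring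
  rcases Nat.even_or_odd (i - k) with ⟨m, hm⟩ | ⟨m, hm⟩
  · rcases Nat.eq_zero_or_pos m with rfl | hmpos
    · have hik' : i = k := by omega
      subst hik'
      rw [tcoef_self, tcoef_self, tcoef_of_lt (by omega)]; ring
    · have hi : i = k + 2*m := by omega
      subst hi
      rw [tcoef, if_pos (by omega : k+1 ≤ k+2*m+1 ∧ (k+2*m+1-(k+1))%2 = 0),
          tcoef, if_pos (by omega : k ≤ k+2*m ∧ (k+2*m-k)%2 = 0),
          tcoef]
      have h1 : (k+2*m+1-(k+1))/2 = m := by omega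
      have h2 : (k+2*m-k)/2 = m := by omega
      rw [h1, h2]
      rcases Nat.eq_zero_or_pos (m-1) with hm1 | hm1
      · have hm' : m = 1 := by omega
        subst hm'
        rw [if_pos (by omega : k+2 ≤ k+2*1 ∧ (k+2*1-(k+2))%2 = 0)]
        have h3 : (k+2*1-(k+2))/2 = 0 := by omega
        have h4 : k+2*1 = (k+1)+1 := by ring
        have h5 : k+2*1+1 = ((k+1)+1)+1 := by ring
        rw [h3, h4, h5, Nat.factorial_succ ((k+1)+1), Nat.factorial_succ (k+1),
            Nat.factorial_succ k, Nat.factorial_zero, Nat.factorial_one]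
        push_cast
        field_simp
        ring
      · obtain ⟨n, hn⟩ : ∃ n, m = n + 1 := ⟨m-1, by omega⟩
        subst hn
        rw [if_pos (by omega : k+2 ≤ k+2*(n+1) ∧ (k+2*(n+1)-(k+2))%2 = 0)]
        have h3 : (k+2*(n+1)-(k+2))/2 = n := by omega
        have h4 : k+2*(n+1) = (k+2*n+1)+1 := by ring
        rw [h3]
        rw [show k+2*(n+1)+1 = ((k+2*n+1)+1)+1 from by ring, h4,
            Nat.factorial_succ ((k+2*n+1)+1), Nat.factorial_succ (k+2*n+1),
            Nat.factorial_succ (k+1), Nat.factorial_succ k, Nat.factorial_succ n,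
            pow_succ]
        push_cast
        field_simp
        ring
  · rw [tcoef, if_neg (by omega), tcoef, if_neg (by omega), tcoef, if_neg (by omega)]
    ring

noncomputable def Dk (k : ℕ) : ℝ := (-2)^k * k.factorial

lemma Dk_succ (k : ℕ) : Dk (k+1) = (-2*(k+1)) * Dk k := by
  simp only [Dk, pow_succ, Nat.factorial_succ]
  push_cast; ring

noncomputable def S (N i j : ℕ) : ℝ :=
  ∑ k ∈ Finset.range N, tcoef i k * tcoef j k * Dk k

lemma S_shift {N i j : ℕ} (hi : i+2 ≤ N) (hj : j+2 ≤ N) :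
    S N (i+1) j = S N i (j+1) := by
  obtain ⟨M, rfl⟩ : ∃ M, N = M+1 := ⟨N-1, by omega⟩
  set G : ℕ → ℝ := fun k =>
    Dk (k+1) * (tcoef i k * tcoef j (k+1) - tcoef i (k+1) * tcoef j k) with hG
  have key : S (M+1) (i+1) j - S (M+1) i (j+1)
      = (∑ k ∈ Finset.range M, (G k - G (k+1))) - G 0 := by
    unfold S
    rw [Finset.sum_range_succ' _ M, Finset.sum_range_succ' _ M]
    have hterm : ∀ k ∈ Finset.range M,
        tcoef (i+1) (k+1) * tcoef j (k+1) * Dk (k+1)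
          - tcoef i (k+1) * tcoef (j+1) (k+1) * Dk (k+1)
        = G k - G (k+1) := by
      intro k _
      rw [tcoef_rec i k, tcoef_rec j k, hG]
      simp only
      rw [Dk_succ (k+1)]
      push_cast; ring
    have hsums : ∑ k ∈ Finset.range M, tcoef (i+1) (k+1) * tcoef j (k+1) * Dk (k+1)
        - ∑ k ∈ Finset.range M, tcoef i (k+1) * tcoef (j+1) (k+1) * Dk (k+1)
        = ∑ k ∈ Finset.range M, (G k - G (k+1)) := by
      rw [← Finset.sum_sub_distrib]
      exact Finset.sum_congr rfl hterm
    have hbound : tcoef (i+1) 0 * tcoef j 0 * Dk 0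
        - tcoef i 0 * tcoef (j+1) 0 * Dk 0 = -G 0 := by
      rw [tcoef_rec_zero i, tcoef_rec_zero j, hG]
      norm_num [Dk]
      ring
    linarith [hsums, hbound]
  have htele : ∑ k ∈ Finset.range M, (G k - G (k+1)) = G 0 - G M :=
    Finset.sum_range_sub' G M
  have hGM : G M = 0 := by
    rw [hG]
    simp only
    rw [tcoef_of_lt (by omega : i < M), tcoef_of_lt (by omega : i < M+1)]
    ring
  have := key
  rw [htele, hGM] at this
  linarith

lemma S_eq (N : ℕ) : ∀ i j : ℕ, i + j + 2 ≤ N → S N i j = tcoef (i+j) 0 := by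
  intro i
  induction i with
  | zero =>
    intro j hj
    unfold S
    rw [Finset.sum_eq_single 0]
    · rw [tcoef_zero_left 0, if_pos rfl]
      simp [Dk]
    · intro b _ hb
      rw [tcoef_zero_left b, if_neg hb]; ring
    · intro hn; exact absurd (Finset.mem_range.mpr (by omega)) hn
  | succ i ih =>
    intro j hj
    rw [S_shift (by omega) (by omega), ih (j+1) (by omega)]
    congr 1
    omega

lemma S_trunc {N p i j : ℕ} (hp : p ≤ N) (hi : i < p) :
    S N i j = S p i j := by
  unfold S
  rw [Finset.sum_subset (Finset.range_subset_range.mpr hp)]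
  intro x _ hx
  rw [tcoef_of_lt (by simp at hx; omega), zero_mul, zero_mul]

lemma detA (p : ℕ) :
    Matrix.det (Matrix.of fun i j : Fin p => tcoef ((i:ℕ)+(j:ℕ)) 0)
      = (-2:ℝ)^(p.choose 2) * ∏ j ∈ Finset.range p, (j.factorial : ℝ) := by
  set T : Matrix (Fin p) (Fin p) ℝ := Matrix.of fun i k : Fin p => tcoef i k with hT
  have hA : (Matrix.of fun i j : Fin p => tcoef ((i:ℕ)+(j:ℕ)) 0)
      = T * Matrix.diagonal (fun k : Fin p => Dk k) * T.transpose := by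
    ext i j
    rw [Matrix.mul_apply]
    simp only [Matrix.mul_diagonal, Matrix.transpose_apply, hT, Matrix.of_apply]
    have h1 : ∑ k : Fin p, tcoef i k * Dk k * tcoef j k = S p (i:ℕ) (j:ℕ) := by
      rw [S, ← Fin.sum_univ_eq_sum_range (fun k : ℕ => tcoef i k * tcoef j k * Dk k) p]
      exact Finset.sum_congr rfl (fun k _ => by ring)
    rw [h1, ← S_trunc (by omega : p ≤ (i:ℕ)+(j:ℕ)+2+p) i.isLt,
        S_eq _ _ _ (by omega)]
  rw [hA, Matrix.det_mul, Matrix.det_mul, Matrix.det_transpose, Matrix.det_diagonal]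
  have hTdet : T.det = 1 := by
    rw [← Matrix.det_transpose]
    rw [Matrix.det_of_upperTriangular (M := T.transpose)
      (by
        intro a b hab
        simp only [Matrix.transpose_apply, hT, Matrix.of_apply]
        exact tcoef_of_lt (by exact_mod_cast hab))]
    simp [hT, tcoef_self]
  rw [hTdet]
  have hprod : ∏ k : Fin p, Dk (k:ℕ)
      = (-2:ℝ)^(p.choose 2) * ∏ j ∈ Finset.range p, (j.factorial : ℝ) := by
    rw [Fin.prod_univ_eq_prod_range (fun k => Dk k) p]
    unfold Dk
    rw [Finset.prod_mul_distrib, Finset.prod_pow_eq_pow_sum,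
        Finset.sum_range_id, Nat.choose_two_right]
  rw [hprod]; ring

lemma scal (e : ℝ) : ∀ p : ℕ,
    (∏ i ∈ Finset.range p, ((-1:ℝ)^i - e)) * (-1)^(p.choose 2)
      = (1 - e^2)^(p/2) * (1 - e)^((p+1)/2 - p/2) := by
  intro p
  induction p with
  | zero => simp
  | succ p ih =>
    rw [Finset.prod_range_succ]
    have hch : (p+1).choose 2 = p.choose 1 + p.choose 2 := Nat.choose_succ_succ p 1
    rw [hch, Nat.choose_one_right, pow_add]
    rcases Nat.even_or_odd p with ⟨m, hm⟩ | ⟨m, hm⟩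
    · subst hm
      have h1 : ((-1:ℝ))^(m+m) = 1 := by
        rw [show m+m = 2*m by ring, pow_mul]; norm_num
      rw [h1, show (m+m+1+1)/2 - (m+m+1)/2 = 1 by omega, show (m+m+1)/2 = m by omega]
      rw [show (m+m)/2 = m by omega, show (m+m+1)/2 - m = 0 by omega] at ih
      rw [pow_zero, mul_one] at ih
      linear_combination (1-e) * ih
    · subst hm
      have h1 : ((-1:ℝ))^(2*m+1) = -1 := by
        rw [pow_succ, pow_mul]; norm_num
      rw [h1, show (2*m+1+1+1)/2 - (2*m+1+1)/2 = 0 by omega,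
          show (2*m+1+1)/2 = m+1 by omega, pow_zero, mul_one, pow_succ]
      rw [show (2*m+1)/2 = m by omega, show (2*m+1+1)/2 - m = 1 by omega,
          pow_one] at ih
      linear_combination (-(1:ℝ)-e) * (-1) * ih

/-- `det_{0≤i,j<p}( (-1)^i H_{i+j}(0) - H_{i+j}(0)e^{-h²} )
  = 2^{C(p,2)} (Π_{j<p} j!) (1-e^{-2h²})^{⌊p/2⌋} (1-e^{-h²})^{⌈p/2⌉-⌊p/2⌋}`. -/
theorem stmt11 (p : ℕ) (hp : 0 < p) (h : ℝ) :
    Matrix.det (Matrix.of fun i j : Fin p =>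
        (-1:ℝ)^(i : ℕ) * hermiteH ((i : ℕ)+(j : ℕ)) 0
          - hermiteH ((i : ℕ)+(j : ℕ)) 0 * Real.exp (-h^2)) =
      2^(p.choose 2) * (∏ j ∈ Finset.range p, (j.factorial : ℝ)) *
        (1 - Real.exp (-2*h^2))^(p/2) * (1 - Real.exp (-h^2))^((p+1)/2 - p/2) := by
  set e : ℝ := Real.exp (-h^2) with he
  have hM : (Matrix.of fun i j : Fin p =>
        (-1:ℝ)^(i : ℕ) * hermiteH ((i : ℕ)+(j : ℕ)) 0
          - hermiteH ((i : ℕ)+(j : ℕ)) 0 * e)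
      = Matrix.of (fun i j : Fin p => ((-1:ℝ)^(i:ℕ) - e) *
          (Matrix.of fun i j : Fin p => tcoef ((i:ℕ)+(j:ℕ)) 0) i j) := by
    ext i j
    simp only [Matrix.of_apply, hermiteH_zero]
    ring
  rw [hM, Matrix.det_mul_column, detA p]
  have he2 : Real.exp (-2*h^2) = e^2 := by
    rw [he, pow_two (Real.exp (-h^2)), ← Real.exp_add]
    congr 1
    ring
  rw [he2]
  have hprod : ∏ i : Fin p, ((-1:ℝ)^(i:ℕ) - e)
      = ∏ i ∈ Finset.range p, ((-1:ℝ)^i - e) :=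
    Fin.prod_univ_eq_prod_range (fun i => (-1:ℝ)^i - e) p
  rw [hprod]
  have hs := scal e p
  have hneg : ((-2:ℝ))^(p.choose 2) = (-1)^(p.choose 2) * 2^(p.choose 2) := by
    rw [← mul_pow]; norm_num
  rw [hneg]
  linear_combination (2:ℝ)^(p.choose 2) * (∏ j ∈ Finset.range p, (j.factorial : ℝ)) * hs
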